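/- Let m ≥ 3. If two m-gonal forms Δ_m(a₁,…,aₙ) and Δ_m(a′₁,…,a′ₙ) in n variables are equivalent as quadratic polynomials, then they are equal up to a permutation of the variables; that is, (a′₁,…,a′ₙ) is a permutation of (a₁,…,aₙ). -/

import Mathlib

noncomputable section

open Matrix

/-- The `m`-gonal form `Δ_m(a₁, …, aₙ)` in `n` variables, as a quadratic polynomial
`x ↦ Σᵢ aᵢ·((m−2)xᵢ² − (m−4)xᵢ)/2` over `ℚ`. -/
def mgonal (m : ℕ) {n : ℕ} (a : Fin n → ℕ) (x : Fin n → ℚ) : ℚ :=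
  ∑ i, (a i : ℚ) * (((m : ℚ) - 2) * (x i) ^ 2 - ((m : ℚ) - 4) * x i) / 2

namespace Stmt16Aux

variable {n : ℕ}

/-- The weighted bilinear form `Σ wᵢ xᵢ yᵢ` on `ℤⁿ`. -/
def B (w : Fin n → ℕ) (x y : Fin n → ℤ) : ℤ := ∑ i, (w i : ℤ) * x i * y i

lemma B_neg_neg (w : Fin n → ℕ) (x y : Fin n → ℤ) : B w (-x) (-y) = B w x y := by
  simp [B]

lemma B_single_single (w : Fin n → ℕ) (i : Fin n) :
    B w (Pi.single i 1) (Pi.single i 1) = w i := by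
  classical
  rw [B, Finset.sum_eq_single i]
  · simp
  · intro j _ hj
    simp [Pi.single_apply, hj]
  · simp

end Stmt16Aux

namespace Stmt16Aux

variable {n : ℕ}

lemma irr_single (w : Fin n → ℕ) (hw : ∀ i, 0 < w i) (i : Fin n) :
    ∀ y z : Fin n → ℤ, Pi.single i 1 = y + z → B w y z = 0 → y = 0 ∨ z = 0 := by
  classical
  intro y z hsum hB0
  have hz : ∀ j, z j = (Pi.single i 1 : Fin n → ℤ) j - y j := by
    intro j
    have := congrFun hsum j
    simp only [Pi.add_apply] at this
    omega
  have hterm : ∀ j ∈ Finset.univ, (w j : ℤ) * y j * z j ≤ 0 := by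
    intro j _
    have hwj : (0:ℤ) < (w j : ℤ) := by exact_mod_cast hw j
    rcases eq_or_ne j i with rfl | hji
    · have hzj : z j = 1 - y j := by rw [hz j, Pi.single_eq_same]
      rw [hzj]
      have h2 : y j * (1 - y j) ≤ 0 := by
        rcases le_or_gt (y j) 0 with h | h
        · exact mul_nonpos_iff.mpr (Or.inr ⟨h, by omega⟩)
        · exact mul_nonpos_iff.mpr (Or.inl ⟨by omega, by omega⟩)
      calc (w j : ℤ) * y j * (1 - y j) = (w j : ℤ) * (y j * (1 - y j)) := by ring
        _ ≤ 0 := mul_nonpos_iff.mpr (Or.inl ⟨hwj.le, h2⟩)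
    · have hzj : z j = - y j := by rw [hz j, Pi.single_eq_of_ne hji]; ring
      rw [hzj]
      nlinarith [sq_nonneg (y j)]
  have hall := (Finset.sum_eq_zero_iff_of_nonpos hterm).mp hB0
  rcases eq_or_ne (y i) 0 with hyi | hyi
  · left
    funext j
    rcases eq_or_ne j i with rfl | hji
    · exact hyi
    · have := hall j (Finset.mem_univ j)
      have hzj : z j = - y j := by rw [hz j, Pi.single_eq_of_ne hji]; ring
      rw [hzj] at this
      have hwj : (0:ℤ) < (w j : ℤ) := by exact_mod_cast hw j
      have : (y j) * (y j) = 0 := by nlinarith [sq_nonneg (y j)]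
      have := mul_self_eq_zero.mp this
      simpa using this
  · right
    have hi := hall i (Finset.mem_univ i)
    have hzi : z i = 1 - y i := by rw [hz i, Pi.single_eq_same]
    have hwi : (0:ℤ) < (w i : ℤ) := by exact_mod_cast hw i
    have hyi1 : y i = 1 := by
      rw [hzi] at hi
      have : y i * (1 - y i) = 0 := by
        rcases mul_eq_zero.mp (by rw [← mul_assoc]; exact hi : (w i : ℤ) * (y i * (1 - y i)) = 0) with h | h
        · exact absurd h hwi.ne'
        · exact h
      rcases mul_eq_zero.mp this with h | h
      · exact absurd h hyi
      · omega
    funext j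
    rcases eq_or_ne j i with rfl | hji
    · simp [hzi, hyi1]
    · have := hall j (Finset.mem_univ j)
      have hzj : z j = - y j := by rw [hz j, Pi.single_eq_of_ne hji]; ring
      have hwj : (0:ℤ) < (w j : ℤ) := by exact_mod_cast hw j
      rw [hzj] at this
      have hy0 : (y j) * (y j) = 0 := by nlinarith [sq_nonneg (y j)]
      have := mul_self_eq_zero.mp hy0
      simp [hzj, this]

lemma char (w : Fin n → ℕ) (hw : ∀ i, 0 < w i) (v : Fin n → ℤ) :
    (v ≠ 0 ∧ (∀ (d : ℤ) (c : Fin n → ℤ), v = d • c → IsUnit d)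
      ∧ (∀ y z : Fin n → ℤ, v = y + z → B w y z = 0 → y = 0 ∨ z = 0))
    ↔ ∃ i, v = Pi.single i 1 ∨ v = - Pi.single i 1 := by
  classical
  constructor
  · rintro ⟨hne, hprim, hirr⟩
    obtain ⟨i, hvi⟩ : ∃ i, v i ≠ 0 := by
      by_contra h
      push_neg at h
      exact hne (funext fun j => h j)
    have hall : ∀ j, j ≠ i → v j = 0 := by
      by_contra h
      push_neg at h
      obtain ⟨j, hji, hvj⟩ := h
      set y : Fin n → ℤ := Pi.single i (v i) with hy
      set z : Fin n → ℤ := v - y with hzdef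
      have hsum : v = y + z := by rw [hzdef]; ring
      have hB0 : B w y z = 0 := by
        rw [B, Finset.sum_eq_single i]
        · simp [hy, hzdef]
        · intro k _ hk
          simp [hy, Pi.single_eq_of_ne hk]
        · simp
      rcases hirr y z hsum hB0 with h0 | h0
      · have := congrFun h0 i
        simp [hy] at this
        exact hvi this
      · have := congrFun h0 j
        simp [hzdef, hy, Pi.single_eq_of_ne hji] at this
        exact hvj this
    have hv : v = (v i) • Pi.single i 1 := by
      funext j
      rcases eq_or_ne j i with rfl | hji
      · simp
      · simp [hall j hji, Pi.single_eq_of_ne hji]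
    have := hprim (v i) _ hv
    rcases Int.isUnit_iff.mp this with h1 | h1
    · exact ⟨i, Or.inl (by rw [hv, h1, one_smul])⟩
    · exact ⟨i, Or.inr (by rw [hv, h1]; funext j; simp)⟩
  · rintro ⟨i, hv | hv⟩
    · refine ⟨?_, ?_, ?_⟩
      · intro h
        have := congrFun h i
        simp [hv] at this
      · intro d c hd
        have := congrFun hd i
        rw [hv] at this
        simp at this
        exact IsUnit.of_mul_eq_one (a := d) (c i) this.symm
      · rw [hv]; exact irr_single w hw i
    · refine ⟨?_, ?_, ?_⟩
      · intro h
        have := congrFun h i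
        simp [hv] at this
      · intro d c hd
        have := congrFun hd i
        rw [hv] at this
        simp at this
        exact IsUnit.of_mul_eq_one (a := d) (-(c i)) (by linarith [mul_neg d (c i)])
      · intro y z hsum hB0
        have h2 : Pi.single i 1 = (-y) + (-z) := by
          rw [← neg_add, ← hsum, hv, neg_neg]
        have h3 : B w (-y) (-z) = 0 := by rw [B_neg_neg]; exact hB0
        rcases irr_single w hw i (-y) (-z) h2 h3 with h | h
        · left; simpa using h
        · right; simpa using h

end Stmt16Aux

namespace Stmt16Aux

lemma inj_aux {n : ℕ} (w w' : Fin n → ℕ) (hw : ∀ i, 0 < w i) (hw' : ∀ i, 0 < w' i)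
    (f g : (Fin n → ℤ) → (Fin n → ℤ))
    (hgf : ∀ x, g (f x) = x) (hfg : ∀ x, f (g x) = x)
    (hgadd : ∀ x y, g (x + y) = g x + g y)
    (hgsmul : ∀ (d : ℤ) (x), g (d • x) = d • g x)
    (hB : ∀ x y, B w' x y = B w (f x) (f y)) (c : ℕ) :
    Fintype.card {i // w' i = c} ≤ Fintype.card {i // w i = c} := by
  classical
  have hg0 : g 0 = 0 := by
    have := hgsmul 0 0
    simpa using this
  have hf0 : f 0 = 0 := by
    conv_lhs => rw [← hg0]
    exact hfg 0
  have key : ∀ i : Fin n, w' i = c → ∃ j : Fin n, w j = c ∧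
      (f (Pi.single i 1) = Pi.single j 1 ∨ f (Pi.single i 1) = - Pi.single j 1) := by
    intro i hi
    obtain ⟨hne, hprim, hirr⟩ := (char w' hw' (Pi.single i 1)).mpr ⟨i, Or.inl rfl⟩
    have hv : ∃ j, f (Pi.single i 1) = Pi.single j 1 ∨ f (Pi.single i 1) = - Pi.single j 1 := by
      apply (char w hw (f (Pi.single i 1))).mp
      refine ⟨?_, ?_, ?_⟩
      · intro h0
        apply hne
        have := congrArg g h0
        rwa [hgf, hg0] at this
      · intro d cc hd
        have := congrArg g hd
        rw [hgf, hgsmul] at this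
        exact hprim d (g cc) this
      · intro y z hsum hB0
        have h2 : Pi.single i 1 = g y + g z := by
          rw [← hgadd, ← hsum, hgf]
        have h3 : B w' (g y) (g z) = 0 := by
          rw [hB, hfg, hfg]; exact hB0
        rcases hirr _ _ h2 h3 with h | h
        · left
          have := congrArg f h
          rwa [hfg, hf0] at this
        · right
          have := congrArg f h
          rwa [hfg, hf0] at this
    obtain ⟨j, hj⟩ := hv
    refine ⟨j, ?_, hj⟩
    have hBv : B w (f (Pi.single i 1)) (f (Pi.single i 1)) = (c : ℤ) := by
      rw [← hB, B_single_single, hi]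
    have hBv' : B w (f (Pi.single i 1)) (f (Pi.single i 1)) = (w j : ℤ) := by
      rcases hj with h | h
      · rw [h, B_single_single]
      · rw [h, B_neg_neg, B_single_single]
    exact_mod_cast hBv'.symm.trans hBv
  set φ : {i // w' i = c} → {j // w j = c} :=
    fun p => ⟨(key p.1 p.2).choose, (key p.1 p.2).choose_spec.1⟩ with hφ
  have hinj : Function.Injective φ := by
    rintro ⟨i₁, h₁⟩ ⟨i₂, h₂⟩ heq12
    have hs1 := (key i₁ h₁).choose_spec.2
    have hs2 := (key i₂ h₂).choose_spec.2
    have hji : (key i₁ h₁).choose = (key i₂ h₂).choose := congrArg Subtype.val heq12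
    rw [hji] at hs1
    set j := (key i₂ h₂).choose
    have hsingle : (Pi.single i₁ 1 : Fin n → ℤ) = Pi.single i₂ 1 ∨ Pi.single i₁ (1:ℤ) = - (Pi.single i₂ 1 : Fin n → ℤ) := by
      have hgneg : ∀ x, g (-x) = - g x := by
        intro x
        have := hgsmul (-1) x
        simpa using this
      rcases hs1 with ha1 | ha1 <;> rcases hs2 with ha2 | ha2
      · left
        have : g (f (Pi.single i₁ 1)) = g (f (Pi.single i₂ 1)) := by rw [ha1, ha2]
        rwa [hgf, hgf] at this
      · right
        have : g (f (Pi.single i₁ 1)) = g (- f (Pi.single i₂ 1)) := by rw [ha1, ha2, neg_neg]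
        rwa [hgf, hgneg, hgf] at this
      · right
        have : g (f (Pi.single i₁ 1)) = g (- f (Pi.single i₂ 1)) := by rw [ha1, ha2]
        rwa [hgf, hgneg, hgf] at this
      · left
        have : g (f (Pi.single i₁ 1)) = g (f (Pi.single i₂ 1)) := by rw [ha1, ha2]
        rwa [hgf, hgf] at this
    apply Subtype.ext
    show i₁ = i₂
    by_contra hne
    rcases hsingle with h | h
    · have hh := congrFun h i₁
      rw [Pi.single_eq_same, Pi.single_eq_of_ne hne] at hh
      exact one_ne_zero hh
    · have hh := congrFun h i₁
      rw [Pi.single_eq_same] at hh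
      rw [Pi.neg_apply, Pi.single_eq_of_ne hne] at hh
      simp at hh
  exact Fintype.card_le_of_injective φ hinj

end Stmt16Aux

namespace Stmt16Aux

lemma polar (m : ℕ) {n : ℕ} (w : Fin n → ℕ) (b s t : Fin n → ℚ) :
    mgonal m w (b + s + t) - mgonal m w (b + s) - mgonal m w (b + t) + mgonal m w b
      = ((m:ℚ) - 2) * ∑ i, (w i : ℚ) * s i * t i := by
  simp only [mgonal, Pi.add_apply]
  rw [Finset.mul_sum, ← Finset.sum_sub_distrib, ← Finset.sum_sub_distrib,
    ← Finset.sum_add_distrib]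
  exact Finset.sum_congr rfl fun i _ => by ring

end Stmt16Aux


/-- Let `m ≥ 3`.  If two `m`-gonal forms `Δ_m(a₁, …, aₙ)` and
`Δ_m(a′₁, …, a′ₙ)` in `n` variables (with positive integer coefficients) are equivalent as
quadratic polynomials, i.e. `Δ_m(a′)(x) = Δ_m(a)(xT + u)` for some `T ∈ GLₙ(ℤ)` and
`u ∈ ℤⁿ`, then `(a′₁, …, a′ₙ)` is a permutation of `(a₁, …, aₙ)`. -/
theorem stmt_16 (m : ℕ) (hm : 3 ≤ m) (n : ℕ) (a a' : Fin n → ℕ)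
    (ha : ∀ i, 0 < a i) (ha' : ∀ i, 0 < a' i)
    (heq : ∃ T : Matrix (Fin n) (Fin n) ℤ, IsUnit T.det ∧ ∃ u : Fin n → ℤ,
      ∀ x : Fin n → ℚ,
        mgonal m a' x = mgonal m a (x ᵥ* T.map ((↑) : ℤ → ℚ) + fun i => (u i : ℚ))) :
    ∃ σ : Equiv.Perm (Fin n), ∀ i, a' i = a (σ i) := by

  classical
  obtain ⟨T, hdet, u, hpoly⟩ := heq
  set Tq : Matrix (Fin n) (Fin n) ℚ := T.map ((↑) : ℤ → ℚ) with hTq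
  set uq : Fin n → ℚ := fun i => (u i : ℚ) with huq
  have hm2 : ((m:ℚ) - 2) ≠ 0 := by
    have : (3:ℚ) ≤ (m:ℚ) := by exact_mod_cast hm
    linarith
  -- polarization identity over ℚ
  have hq : ∀ x y : Fin n → ℚ,
      (∑ i, (a' i : ℚ) * x i * y i) = ∑ i, (a i : ℚ) * (x ᵥ* Tq) i * (y ᵥ* Tq) i := by
    intro x y
    have e1 := Stmt16Aux.polar m a' 0 x y
    rw [zero_add, zero_add] at e1
    have e2 := Stmt16Aux.polar m a uq (x ᵥ* Tq) (y ᵥ* Tq)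
    have k1 : mgonal m a' (x + y) = mgonal m a (uq + x ᵥ* Tq + y ᵥ* Tq) := by
      rw [hpoly (x + y)]
      congr 1
      rw [Matrix.add_vecMul]
      abel
    have k2 : mgonal m a' x = mgonal m a (uq + x ᵥ* Tq) := by
      rw [hpoly x]
      congr 1
      abel
    have k3 : mgonal m a' y = mgonal m a (uq + y ᵥ* Tq) := by
      rw [hpoly y]
      congr 1
      abel
    have k4 : mgonal m a' 0 = mgonal m a uq := by
      rw [hpoly 0]
      congr 1
      rw [Matrix.zero_vecMul, zero_add]
    apply mul_left_cancel₀ hm2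
    rw [← e1, ← e2, k1, k2, k3, k4]
  -- integral bilinear identity
  have hBZ : ∀ x y : Fin n → ℤ, Stmt16Aux.B a' x y = Stmt16Aux.B a (x ᵥ* T) (y ᵥ* T) := by
    intro x y
    have hcast : ∀ (z : Fin n → ℤ) (j : Fin n),
        ((fun i => (z i : ℚ)) ᵥ* Tq) j = ((z ᵥ* T) j : ℚ) := by
      intro z j
      simp only [Matrix.vecMul, dotProduct, hTq, Matrix.map_apply]
      push_cast
      rfl
    have := hq (fun i => (x i : ℚ)) (fun i => (y i : ℚ))
    simp only [hcast] at this
    have goalcast : ((Stmt16Aux.B a' x y : ℤ) : ℚ) = ((Stmt16Aux.B a (x ᵥ* T) (y ᵥ* T) : ℤ) : ℚ) := by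
      simp only [Stmt16Aux.B]
      push_cast
      exact this
    exact_mod_cast goalcast
  -- inverse matrix
  have hU : IsUnit T := (Matrix.isUnit_iff_isUnit_det T).mpr hdet
  obtain ⟨V, hV⟩ := hU
  set S : Matrix (Fin n) (Fin n) ℤ := ↑V⁻¹ with hS
  have hTS : T * S = 1 := by rw [← hV, hS]; exact_mod_cast V.mul_inv
  have hST : S * T = 1 := by rw [← hV, hS]; exact_mod_cast V.inv_mul
  set f : (Fin n → ℤ) → (Fin n → ℤ) := fun x => x ᵥ* T with hf
  set g : (Fin n → ℤ) → (Fin n → ℤ) := fun y => y ᵥ* S with hg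
  have hgf : ∀ x, g (f x) = x := by
    intro x
    show (x ᵥ* T) ᵥ* S = x
    rw [Matrix.vecMul_vecMul, hTS, Matrix.vecMul_one]
  have hfg : ∀ x, f (g x) = x := by
    intro x
    show (x ᵥ* S) ᵥ* T = x
    rw [Matrix.vecMul_vecMul, hST, Matrix.vecMul_one]
  have hgadd : ∀ x y : Fin n → ℤ, g (x + y) = g x + g y := by
    intro x y
    show (x + y) ᵥ* S = x ᵥ* S + y ᵥ* S
    rw [Matrix.add_vecMul]
  have hfadd : ∀ x y : Fin n → ℤ, f (x + y) = f x + f y := by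
    intro x y
    show (x + y) ᵥ* T = x ᵥ* T + y ᵥ* T
    rw [Matrix.add_vecMul]
  have hgsmul : ∀ (d : ℤ) (x : Fin n → ℤ), g (d • x) = d • g x := by
    intro d x
    show (d • x) ᵥ* S = d • (x ᵥ* S)
    funext j
    simp [Matrix.vecMul, dotProduct, Finset.mul_sum, mul_assoc]
  have hfsmul : ∀ (d : ℤ) (x : Fin n → ℤ), f (d • x) = d • f x := by
    intro d x
    show (d • x) ᵥ* T = d • (x ᵥ* T)
    funext j
    simp [Matrix.vecMul, dotProduct, Finset.mul_sum, mul_assoc]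
  have hB2 : ∀ x y : Fin n → ℤ, Stmt16Aux.B a x y = Stmt16Aux.B a' (g x) (g y) := by
    intro x y
    rw [hBZ (g x) (g y)]
    show Stmt16Aux.B a x y = Stmt16Aux.B a (f (g x)) (f (g y))
    rw [hfg, hfg]
  have hcard : ∀ c : ℕ, Fintype.card {i // a' i = c} = Fintype.card {i // a i = c} := by
    intro c
    refine le_antisymm ?_ ?_
    · exact Stmt16Aux.inj_aux a a' ha ha' f g hgf hfg hgadd hgsmul hBZ c
    · exact Stmt16Aux.inj_aux a' a ha' ha g f hfg hgf hfadd hfsmul hB2 c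
  -- build the permutation
  set E : ∀ c : ℕ, {i // a' i = c} ≃ {i // a i = c} :=
    fun c => Fintype.equivOfCardEq (hcard c) with hE
  set σ : Equiv.Perm (Fin n) :=
    ((Equiv.sigmaFiberEquiv a').symm).trans
      ((Equiv.sigmaCongrRight E).trans (Equiv.sigmaFiberEquiv a)) with hσ
  refine ⟨σ, fun i => ?_⟩
  have hσi : σ i = ((E (a' i)) ⟨i, rfl⟩).1 := rfl
  rw [hσi]
  exact (((E (a' i)) ⟨i, rfl⟩).2).symm
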